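/- arXiv:2103.13773 — 2 statements merged into one kernel-verified Lean document; each statement's English description precedes it below -/
import Mathlib

section
/- Let Â ∈ S_d^{++}(ℝ) and C ∈ S_d^{+}(ℝ). For each t ∈ [0,T], the matrix ξ(t) = −(Â⁻¹/2)(I − e^{−2Â(T−t)}) − e^{−Â(T−t)}(C + Â)⁻¹ e^{−Â(T−t)} is negative definite, and in particular invertible. -/
open Matrix NormedSpace

lemma posDef_conj_aux {d : ℕ} {P B : Matrix (Fin d) (Fin d) ℝ} (hP : P.PosDef)
    (hB : IsUnit B) : (Bᴴ * P * B).PosDef := by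
  refine Matrix.PosDef.of_dotProduct_mulVec_pos (isHermitian_conjTranspose_mul_mul B hP.1) fun x hx => ?_
  have hx' : B *ᵥ x ≠ 0 := by
    intro h
    apply hx
    have := congrArg (fun y => B⁻¹ *ᵥ y) h
    simpa [Matrix.mulVec_mulVec,
      Matrix.nonsing_inv_mul B ((Matrix.isUnit_iff_isUnit_det B).mp hB)] using this
  have key : star x ⬝ᵥ (Bᴴ * P * B) *ᵥ x = star (B *ᵥ x) ⬝ᵥ P *ᵥ (B *ᵥ x) := by
    rw [← Matrix.mulVec_mulVec, ← Matrix.mulVec_mulVec,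
      Matrix.dotProduct_mulVec (star x), Matrix.vecMul_conjTranspose]
    simp
  rw [key]
  exact hP.dotProduct_mulVec_pos hx'

/-- For `Ahat` symmetric positive definite and `C` positive semi-definite, the matrix
`ξ(t) = −(Ahat⁻¹/2)(I − e^{−2Ahat(T−t)}) − e^{−Ahat(T−t)}(C+Ahat)⁻¹e^{−Ahat(T−t)}` is negative
definite (hence invertible) for every `t ∈ [0,T]`. -/
theorem xi_negative_definite (d : ℕ) (T : ℝ) (hT : 0 ≤ T)
    (Ahat C : Matrix (Fin d) (Fin d) ℝ) (hA : Ahat.PosDef) (hC : C.PosSemidef) :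
    ∀ t ∈ Set.Icc (0 : ℝ) T,
      (-(-((1 / 2 : ℝ) • Ahat⁻¹ * (1 - exp ((-(2 * (T - t))) • Ahat)))
          - exp ((-(T - t)) • Ahat) * (C + Ahat)⁻¹ * exp ((-(T - t)) • Ahat))).PosDef ∧
      IsUnit (-((1 / 2 : ℝ) • Ahat⁻¹ * (1 - exp ((-(2 * (T - t))) • Ahat)))
          - exp ((-(T - t)) • Ahat) * (C + Ahat)⁻¹ * exp ((-(T - t)) • Ahat)) := by
  classical
  intro t ht
  set s : ℝ := T - t with hs_def
  have hs : 0 ≤ s := by simp only [hs_def]; linarith [ht.2]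
  have hH := hA.1
  set U : Matrix (Fin d) (Fin d) ℝ := (hH.eigenvectorUnitary : Matrix (Fin d) (Fin d) ℝ)
    with hU_def
  set lam : Fin d → ℝ := hH.eigenvalues with hlam_def
  have hpos : ∀ i, 0 < lam i := fun i => hA.eigenvalues_pos i
  have hmem := hH.eigenvectorUnitary.2
  rw [Unitary.mem_iff] at hmem
  have h1 : Uᴴ * U = 1 := hmem.1
  have h2 : U * Uᴴ = 1 := hmem.2
  have hUunit : IsUnit U := by
    rw [Matrix.isUnit_iff_isUnit_det]
    exact Matrix.isUnit_det_of_right_inverse h2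
  have hUinv : U⁻¹ = Uᴴ := Matrix.inv_eq_right_inv h2
  have hspec : Ahat = U * diagonal lam * Uᴴ := by
    have := hH.spectral_theorem
    simpa [Matrix.star_eq_conjTranspose] using this
  -- helper identities for conjugated diagonal matrices
  have hmul : ∀ v w : Fin d → ℝ,
      (U * diagonal v * Uᴴ) * (U * diagonal w * Uᴴ)
        = U * diagonal (fun i => v i * w i) * Uᴴ := by
    intro v w
    simp only [Matrix.mul_assoc]
    rw [← Matrix.mul_assoc Uᴴ U, h1, Matrix.one_mul,
      ← Matrix.mul_assoc (diagonal v), Matrix.diagonal_mul_diagonal]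
  have hsmul : ∀ (c : ℝ) (v : Fin d → ℝ),
      c • (U * diagonal v * Uᴴ) = U * diagonal (fun i => c * v i) * Uᴴ := by
    intro c v
    rw [show (fun i => c * v i) = c • v from rfl, Matrix.diagonal_smul,
      Matrix.mul_smul, Matrix.smul_mul]
  have hsub : ∀ v w : Fin d → ℝ,
      (U * diagonal v * Uᴴ) - (U * diagonal w * Uᴴ)
        = U * diagonal (fun i => v i - w i) * Uᴴ := by
    intro v w
    rw [← Matrix.diagonal_sub,
      Matrix.mul_sub, Matrix.sub_mul]
  have hexp : ∀ c : ℝ, exp (c • Ahat)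
      = U * diagonal (fun i => Real.exp (c * lam i)) * Uᴴ := by
    intro c
    have h0 : c • Ahat = U * diagonal (fun i => c * lam i) * U⁻¹ := by
      rw [hUinv, hspec, ← hsmul]
    rw [h0, Matrix.exp_conj U _ hUunit, Matrix.exp_diagonal, hUinv]
    congr 2
    funext i
    rw [Pi.exp_def]
    exact (Real.exp_eq_exp_ℝ ▸ rfl)
  have hAinv : Ahat⁻¹ = U * diagonal (fun i => (lam i)⁻¹) * Uᴴ := by
    apply Matrix.inv_eq_right_inv
    rw [hspec, hmul]
    have : (fun i => lam i * (lam i)⁻¹) = fun _ => (1 : ℝ) := by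
      funext i; exact mul_inv_cancel₀ (hpos i).ne'
    rw [this, Matrix.diagonal_one, Matrix.mul_one, h2]
  -- Term 1 : (1/2) • Ahat⁻¹ * (1 - exp(-2s • Ahat))
  have hone : (1 : Matrix (Fin d) (Fin d) ℝ) = U * diagonal (fun _ => (1 : ℝ)) * Uᴴ := by
    rw [Matrix.diagonal_one, Matrix.mul_one, h2]
  set g : Fin d → ℝ :=
    fun i => (1 / 2 : ℝ) * ((lam i)⁻¹ * (1 - Real.exp (-(2 * s) * lam i))) with hg_def
  have h1e : 1 - exp ((-(2 * s)) • Ahat)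
      = U * diagonal (fun i => 1 - Real.exp (-(2 * s) * lam i)) * Uᴴ := by
    rw [hexp]
    nth_rewrite 1 [hone]
    rw [hsub]
  have hT1 : (1 / 2 : ℝ) • Ahat⁻¹ * (1 - exp ((-(2 * s)) • Ahat))
      = U * diagonal g * Uᴴ := by
    rw [hAinv, h1e, Matrix.smul_mul, hmul, hsmul]
  have hgnonneg : ∀ i, 0 ≤ g i := by
    intro i
    have h1' : Real.exp (-(2 * s) * lam i) ≤ 1 := by
      rw [Real.exp_le_one_iff]
      nlinarith [hpos i, hs]
    have h2' : 0 ≤ (lam i)⁻¹ := le_of_lt (inv_pos.mpr (hpos i))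
    have h3' : 0 ≤ 1 - Real.exp (-(2 * s) * lam i) := by linarith
    rw [hg_def]
    have : (0:ℝ) ≤ (lam i)⁻¹ * (1 - Real.exp (-(2 * s) * lam i)) := mul_nonneg h2' h3'
    positivity
  have hT1psd : ((1 / 2 : ℝ) • Ahat⁻¹ * (1 - exp ((-(2 * s)) • Ahat))).PosSemidef := by
    rw [hT1]
    exact (Matrix.PosSemidef.diagonal (fun i => hgnonneg i)).mul_mul_conjTranspose_same U
  -- Term 2 : E * (C + Ahat)⁻¹ * E with E = exp(-s • Ahat)
  set E : Matrix (Fin d) (Fin d) ℝ := exp ((-s) • Ahat) with hE_def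
  have hUHunit : IsUnit Uᴴ :=
    (Matrix.isUnit_iff_isUnit_det _).mpr (Matrix.isUnit_det_of_right_inverse h1)
  have hEposdef : E.PosDef := by
    rw [hE_def, hexp]
    have hdia : (diagonal (fun i => Real.exp (-s * lam i))).PosDef :=
      Matrix.posDef_diagonal_iff.mpr fun i => Real.exp_pos _
    have := posDef_conj_aux hdia hUHunit
    simpa using this
  have hCA : (C + Ahat).PosDef := Matrix.PosDef.posSemidef_add hC hA
  have hEunit : IsUnit E := Matrix.isUnit_exp _
  have hT2 : (E * (C + Ahat)⁻¹ * E).PosDef := by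
    have := posDef_conj_aux hCA.inv hEunit
    rwa [hEposdef.1] at this
  set T1 := (1 / 2 : ℝ) • Ahat⁻¹ * (1 - exp ((-(2 * s)) • Ahat)) with hT1_def
  have hsum : (T1 + E * (C + Ahat)⁻¹ * E).PosDef := Matrix.PosDef.posSemidef_add hT1psd hT2
  constructor
  · have e : -(-T1 - E * (C + Ahat)⁻¹ * E) = T1 + E * (C + Ahat)⁻¹ * E := by abel
    rw [e]
    exact hsum
  · have e : -T1 - E * (C + Ahat)⁻¹ * E = -(T1 + E * (C + Ahat)⁻¹ * E) := by abel
    rw [e]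
    exact ((Matrix.isUnit_iff_isUnit_det _).mpr hsum.det_pos.ne'.isUnit).neg
end

section
/- Let Â ∈ S_d^{++}(ℝ) and C ∈ S_d^{+}(ℝ). Then the matrix-valued function a(t) = Â − ((Â⁻¹/2)(I − e^{−2Â(T−t)}) + e^{−Â(T−t)}(C+Â)⁻¹e^{−Â(T−t)})⁻¹ is the unique solution on [0,T] of the matrix Riccati terminal value problem a'(t) = Â² − a(t)², a(T) = −C. -/
open Matrix NormedSpace

/-- The explicit solution `a(t) = Ahat − ((Ahat⁻¹/2)(I − e^{−2Ahat(T−t)}) +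
e^{−Ahat(T−t)}(C+Ahat)⁻¹e^{−Ahat(T−t)})⁻¹` of the matrix Riccati terminal value problem. -/
noncomputable def riccatiSol (d : ℕ) (T : ℝ) (Ahat C : Matrix (Fin d) (Fin d) ℝ) (t : ℝ) :
    Matrix (Fin d) (Fin d) ℝ :=
  Ahat - ((1 / 2 : ℝ) • Ahat⁻¹ * (1 - exp ((-(2 * (T - t))) • Ahat))
    + exp ((-(T - t)) • Ahat) * (C + Ahat)⁻¹ * exp ((-(T - t)) • Ahat))⁻¹

attribute [local instance] Matrix.linftyOpNormedAddCommGroup Matrix.linftyOpNormedRing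
  Matrix.linftyOpNormedAlgebra

variable {d : ℕ}

lemma hasDerivAt_entrywise {f : ℝ → Matrix (Fin d) (Fin d) ℝ} {f' : Matrix (Fin d) (Fin d) ℝ}
    {t : ℝ} :
    HasDerivAt f f' t ↔ ∀ i j, HasDerivAt (fun s => f s i j) (f' i j) t := by
  constructor
  · intro h i j
    let L : Matrix (Fin d) (Fin d) ℝ →ₗ[ℝ] ℝ :=
      { toFun := fun M => M i j, map_add' := fun _ _ => rfl, map_smul' := fun _ _ => rfl }
    exact (L.toContinuousLinearMap.hasFDerivAt.comp_hasDerivAt t h :)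
  · intro h
    have h1 : HasDerivAt (fun s => ∑ i : Fin d, ∑ j : Fin d, f s i j • single i j (1:ℝ))
        (∑ i : Fin d, ∑ j : Fin d, f' i j • single i j (1:ℝ)) t :=
      HasDerivAt.fun_sum fun i _ => HasDerivAt.fun_sum fun j _ => (h i j).smul_const _
    have e1 : ∀ (M : Matrix (Fin d) (Fin d) ℝ),
        ∑ i : Fin d, ∑ j : Fin d, M i j • single i j (1:ℝ) = M := by
      intro M
      conv_rhs => rw [matrix_eq_sum_single M]
      refine Finset.sum_congr rfl fun i _ => Finset.sum_congr rfl fun j _ => ?_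
      rw [smul_single, smul_eq_mul, mul_one]
    simpa only [funext fun s => e1 (f s), e1 f'] using h1

lemma posDef_conj {M E : Matrix (Fin d) (Fin d) ℝ} (hM : M.PosDef) (hE : IsUnit E) :
    (E * M * Eᴴ).PosDef := by
  have hEH : IsUnit Eᴴ := by
    rw [Matrix.isUnit_iff_isUnit_det] at hE ⊢
    rwa [det_conjTranspose, isUnit_star]
  exact hM.mul_mul_conjTranspose_same (Matrix.vecMul_injective_iff_isUnit.mpr hE)

lemma first_posSemidef (Ahat : Matrix (Fin d) (Fin d) ℝ) (hA : Ahat.PosDef) {s : ℝ} (hs : 0 ≤ s) :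
    ((1/2 : ℝ) • Ahat⁻¹ * (1 - exp ((-(2*s)) • Ahat))).PosSemidef := by
  classical
  have hH := hA.isHermitian
  set μ : Fin d → ℝ := hH.eigenvalues with hμdef
  set U : Matrix (Fin d) (Fin d) ℝ :=
    (Matrix.IsHermitian.eigenvectorUnitary hH : Matrix (Fin d) (Fin d) ℝ) with hUdef
  have hUmem := (Matrix.IsHermitian.eigenvectorUnitary hH).2
  rw [Unitary.mem_iff] at hUmem
  have hUU : star U * U = 1 := hUmem.1
  have hUU' : U * star U = 1 := hUmem.2
  have hUunit : IsUnit U := (Matrix.isUnit_iff_isUnit_det U).mpr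
    (IsUnit.of_mul_eq_one _ (by rw [← det_mul, hUU', det_one]))
  have hUinv : U⁻¹ = star U := Matrix.inv_eq_left_inv hUU
  have hspec : Ahat = U * diagonal μ * star U := by
    have := hH.spectral_theorem
    simpa [RCLike.ofReal_real_eq_id] using this
  have hμpos : ∀ i, 0 < μ i := fun i => hA.eigenvalues_pos i
  have key : ∀ X Y : Matrix (Fin d) (Fin d) ℝ,
      (U * X * star U) * (U * Y * star U) = U * (X * Y) * star U := by
    intro X Y
    calc (U * X * star U) * (U * Y * star U)
        = U * (X * ((star U * U) * (Y * star U))) := by simp only [mul_assoc]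
      _ = U * (X * (Y * star U)) := by rw [hUU, one_mul]
      _ = U * (X * Y) * star U := by simp only [mul_assoc]
  have hone : (1 : Matrix (Fin d) (Fin d) ℝ) = U * 1 * star U := by rw [mul_one, hUU']
  have hAinv : Ahat⁻¹ = U * diagonal μ⁻¹ * star U := by
    apply Matrix.inv_eq_right_inv
    rw [hspec, key, diagonal_mul_diagonal]
    have h1 : (fun i => μ i * μ⁻¹ i) = fun _ => (1:ℝ) := by
      funext i; exact mul_inv_cancel₀ (hμpos i).ne'
    rw [h1, diagonal_one, mul_one, hUU']
  have hsm : (-(2*s)) • Ahat = U * diagonal ((-(2*s)) • μ) * star U := by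
    rw [hspec, ← smul_mul_assoc, ← mul_smul_comm, diagonal_smul]
  have hexp : exp ((-(2*s)) • Ahat)
      = U * diagonal (fun i => Real.exp ((-(2*s)) * μ i)) * star U := by
    rw [hsm, ← hUinv, Matrix.exp_conj U _ hUunit, hUinv, Matrix.exp_diagonal]
    congr 1
    congr 1
    funext i
    rw [Pi.exp_def]
    simp [Real.exp_eq_exp_ℝ]
  set g : Fin d → ℝ := fun i => (1/2 : ℝ) * (μ⁻¹ i - μ⁻¹ i * Real.exp ((-(2*s)) * μ i)) with hgdef
  have hmain : (1/2 : ℝ) • Ahat⁻¹ * (1 - exp ((-(2*s)) • Ahat)) = U * diagonal g * star U := by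
    rw [hAinv, hexp, hone]
    rw [← Matrix.sub_mul, ← Matrix.mul_sub]
    rw [smul_mul_assoc, key]
    rw [← smul_mul_assoc, ← mul_smul_comm]
    congr 1
    congr 1
    rw [Matrix.mul_sub, mul_one, diagonal_mul_diagonal, diagonal_sub, ← diagonal_smul]
    congr 1
  have hg : 0 ≤ g := by
    intro i
    have h1 : Real.exp ((-(2*s)) * μ i) ≤ 1 := by
      apply Real.exp_le_one_iff.mpr
      have := (hμpos i).le
      nlinarith
    have h2 : 0 ≤ μ⁻¹ i := by
      simpa using (inv_nonneg.mpr (hμpos i).le)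
    have : μ⁻¹ i * Real.exp ((-(2*s)) * μ i) ≤ μ⁻¹ i := by
      nlinarith [Real.exp_pos ((-(2*s)) * μ i)]
    simp only [Pi.zero_apply, hgdef]
    nlinarith
  have := (Matrix.PosSemidef.diagonal hg).mul_mul_conjTranspose_same U
  rwa [hmain, Matrix.star_eq_conjTranspose]

lemma exp_symm (Ahat : Matrix (Fin d) (Fin d) ℝ) (hH : Ahat.IsHermitian) (c : ℝ) :
    (exp (c • Ahat))ᴴ = exp (c • Ahat) := by
  rw [← Matrix.exp_conjTranspose]
  congr 1
  have hT : Ahatᵀ = Ahat := by simpa using hH.eq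
  simp [hT]

lemma B_posDef (Ahat C : Matrix (Fin d) (Fin d) ℝ) (hA : Ahat.PosDef) (hC : C.PosSemidef)
    {s : ℝ} (hs : 0 ≤ s) :
    ((1/2 : ℝ) • Ahat⁻¹ * (1 - exp ((-(2*s)) • Ahat))
      + exp ((-s) • Ahat) * (C + Ahat)⁻¹ * exp ((-s) • Ahat)).PosDef := by
  have hM : ((C + Ahat)⁻¹).PosDef := (Matrix.PosDef.posSemidef_add hC hA).inv
  have hE : IsUnit (exp ((-s) • Ahat)) := Matrix.isUnit_exp _
  have hsym := exp_symm Ahat hA.isHermitian (-s)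
  have h2 : (exp ((-s) • Ahat) * (C + Ahat)⁻¹ * exp ((-s) • Ahat)).PosDef := by
    have := posDef_conj hM hE
    rwa [hsym] at this
  exact Matrix.PosDef.posSemidef_add (first_posSemidef Ahat hA hs) h2

noncomputable def Bmat (T : ℝ) (Ahat C : Matrix (Fin d) (Fin d) ℝ) (t : ℝ) :
    Matrix (Fin d) (Fin d) ℝ :=
  (1/2 : ℝ) • Ahat⁻¹ * (1 - exp ((-(2*(T-t))) • Ahat))
    + exp ((-(T-t)) • Ahat) * (C + Ahat)⁻¹ * exp ((-(T-t)) • Ahat)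

lemma hasDerivAt_Bmat (T : ℝ) (Ahat C : Matrix (Fin d) (Fin d) ℝ) (hA : Ahat.PosDef) (t : ℝ) :
    HasDerivAt (Bmat T Ahat C)
      (Ahat * Bmat T Ahat C t + Bmat T Ahat C t * Ahat - 1) t := by
  have hdet : IsUnit Ahat.det := (Matrix.isUnit_iff_isUnit_det _).mp hA.isUnit
  have hAP : Ahat * Ahat⁻¹ = 1 := Matrix.mul_nonsing_inv _ hdet
  have hPA : Ahat⁻¹ * Ahat = 1 := Matrix.nonsing_inv_mul _ hdet
  set P := Ahat⁻¹ with hP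
  set M := (C + Ahat)⁻¹ with hM
  set E1 : ℝ → Matrix (Fin d) (Fin d) ℝ := fun u => exp ((-(T-u)) • Ahat) with hE1
  set E2 : ℝ → Matrix (Fin d) (Fin d) ℝ := fun u => exp ((-(2*(T-u))) • Ahat) with hE2
  have hc1 : Commute Ahat (E1 t) := ((Commute.refl Ahat).smul_right _).exp_right
  have hc2 : Commute Ahat (E2 t) := ((Commute.refl Ahat).smul_right _).exp_right
  -- derivatives of the scalar inner functions
  have hφ1 : HasDerivAt (fun u : ℝ => -(T-u)) 1 t := by
    exact (((hasDerivAt_id t).const_sub T).fun_neg).congr_deriv (by norm_num)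
  have hφ2 : HasDerivAt (fun u : ℝ => -(2*(T-u))) 2 t := by
    exact ((((hasDerivAt_id t).const_sub T).const_mul 2).fun_neg).congr_deriv (by norm_num)
  have hdE1 : HasDerivAt E1 (E1 t * Ahat) t := by
    have h := HasDerivAt.scomp t (hasDerivAt_exp_smul_const Ahat (-(T-t))) hφ1
    simp [Function.comp_def, hE1] at h ⊢; exact h
  have hdE2 : HasDerivAt E2 ((2:ℝ) • (E2 t * Ahat)) t := by
    have h := HasDerivAt.scomp t (hasDerivAt_exp_smul_const Ahat (-(2*(T-t)))) hφ2
    simp [Function.comp_def, hE2] at h ⊢; exact h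
  have hsub : HasDerivAt (fun u => 1 - E2 u) (-((2:ℝ) • (E2 t * Ahat))) t := hdE2.const_sub 1
  have hterm1 : HasDerivAt (fun u => (1/2 : ℝ) • P * (1 - E2 u))
      (((1/2 : ℝ) • P) * (-((2:ℝ) • (E2 t * Ahat)))) t :=
    HasDerivAt.const_mul _ hsub
  have hterm2 : HasDerivAt (fun u => E1 u * M * E1 u)
      ((E1 t * Ahat) * M * E1 t + (E1 t * M) * (E1 t * Ahat)) t :=
    (hdE1.mul_const M).mul hdE1
  have hG : HasDerivAt (Bmat T Ahat C)
      (((1/2 : ℝ) • P) * (-((2:ℝ) • (E2 t * Ahat)))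
        + ((E1 t * Ahat) * M * E1 t + (E1 t * M) * (E1 t * Ahat))) t := hterm1.add hterm2
  -- now rewrite the derivative
  have hid : ((1/2 : ℝ) • P) * (-((2:ℝ) • (E2 t * Ahat)))
        + ((E1 t * Ahat) * M * E1 t + (E1 t * M) * (E1 t * Ahat))
      = Ahat * Bmat T Ahat C t + Bmat T Ahat C t * Ahat - 1 := by
    have e1 : ((1/2 : ℝ) • P) * (-((2:ℝ) • (E2 t * Ahat))) = -(E2 t) := by
      calc ((1/2 : ℝ) • P) * (-((2:ℝ) • (E2 t * Ahat)))
          = -(((1/2 : ℝ) • P) * ((2:ℝ) • (E2 t * Ahat))) := by rw [mul_neg]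
        _ = -((((1/2 : ℝ) * 2) • (P * (E2 t * Ahat)))) := by rw [smul_mul_smul_comm]
        _ = -(P * (E2 t * Ahat)) := by norm_num
        _ = -(P * (Ahat * E2 t)) := by rw [← hc2.eq]
        _ = -((P * Ahat) * E2 t) := by rw [mul_assoc]
        _ = -(E2 t) := by rw [hPA, one_mul]
    have e2 : Ahat * ((1/2 : ℝ) • P * (1 - E2 t)) = (1/2 : ℝ) • (1 - E2 t) := by
      rw [smul_mul_assoc, mul_smul_comm, ← mul_assoc, hAP, one_mul]
    have e3 : ((1/2 : ℝ) • P * (1 - E2 t)) * Ahat = (1/2 : ℝ) • (1 - E2 t) := by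
      have hc2' : (1 - E2 t) * Ahat = Ahat * (1 - E2 t) :=
        (((Commute.one_right Ahat).sub_right hc2)).eq.symm
      rw [smul_mul_assoc, smul_mul_assoc, mul_assoc, hc2', ← mul_assoc, hPA, one_mul]
    have e4 : (E1 t * Ahat) * M * E1 t = Ahat * (E1 t * M * E1 t) := by
      rw [← hc1.eq, mul_assoc, mul_assoc, mul_assoc]
    have e5 : (E1 t * M) * (E1 t * Ahat) = (E1 t * M * E1 t) * Ahat := by
      rw [← mul_assoc]
    rw [e1, e4, e5]
    show -(E2 t) + (Ahat * (E1 t * M * E1 t) + (E1 t * M * E1 t) * Ahat)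
      = Ahat * ((1/2 : ℝ) • P * (1 - E2 t) + E1 t * M * E1 t)
        + ((1/2 : ℝ) • P * (1 - E2 t) + E1 t * M * E1 t) * Ahat - 1
    rw [mul_add, add_mul, e2, e3]
    have e6 : (1/2 : ℝ) • (1 - E2 t) + (1/2 : ℝ) • (1 - E2 t) = 1 - E2 t := by
      rw [← add_smul]; norm_num
    have : (1/2 : ℝ) • (1 - E2 t) + Ahat * (E1 t * M * E1 t)
          + ((1/2 : ℝ) • (1 - E2 t) + E1 t * M * E1 t * Ahat) - 1
        = ((1/2 : ℝ) • (1 - E2 t) + (1/2 : ℝ) • (1 - E2 t))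
          + (Ahat * (E1 t * M * E1 t) + E1 t * M * E1 t * Ahat) - 1 := by abel
    rw [this, e6]
    abel
  rw [hid] at hG
  exact hG

lemma riccatiSol_eq (T : ℝ) (Ahat C : Matrix (Fin d) (Fin d) ℝ) :
    riccatiSol d T Ahat C = fun u => Ahat - (Bmat T Ahat C u)⁻¹ := rfl

lemma hasDerivAt_riccatiSol (T : ℝ) (Ahat C : Matrix (Fin d) (Fin d) ℝ)
    (hA : Ahat.PosDef) (hC : C.PosSemidef) {t : ℝ} (ht : t ≤ T) :
    HasDerivAt (riccatiSol d T Ahat C) (Ahat ^ 2 - riccatiSol d T Ahat C t ^ 2) t := by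
  have hBt : (Bmat T Ahat C t).PosDef := B_posDef Ahat C hA hC (s := T - t) (by linarith)
  have hu : IsUnit (Bmat T Ahat C t) := hBt.isUnit
  have hdetB : IsUnit (Bmat T Ahat C t).det := (Matrix.isUnit_iff_isUnit_det _).mp hu
  have hG := hasDerivAt_Bmat T Ahat C hA t
  set B := Bmat T Ahat C t with hBdef
  set N := (Bmat T Ahat C t)⁻¹ with hN
  have hNB : N * B = 1 := Matrix.nonsing_inv_mul _ hdetB
  have hBN : B * N = 1 := Matrix.mul_nonsing_inv _ hdetB
  have hinv : HasFDerivAt Ring.inverse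
      (-(ContinuousLinearMap.mulLeftRight ℝ _ (↑hu.unit⁻¹) (↑hu.unit⁻¹))) B := by
    have := hasFDerivAt_ringInverse (𝕜 := ℝ) hu.unit
    rwa [hu.unit_spec] at this
  have hcoe : (↑hu.unit⁻¹ : Matrix (Fin d) (Fin d) ℝ) = N := by
    rw [hN, ← hBdef]
    exact (Matrix.coe_units_inv hu.unit).trans (by rw [hu.unit_spec])
  have h2 := hinv.comp_hasDerivAt t hG
  have heq : Ring.inverse ∘ (Bmat T Ahat C) = fun u => (Bmat T Ahat C u)⁻¹ := by
    funext u
    simp only [Function.comp_apply]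
    rw [Matrix.nonsing_inv_eq_ringInverse]
  rw [heq] at h2
  have h3 : HasDerivAt (fun u => (Bmat T Ahat C u)⁻¹)
      (-(N * (Ahat * B + B * Ahat - 1) * N)) t := by
    rw [show -(N * (Ahat * B + B * Ahat - 1) * N) = (-(ContinuousLinearMap.mulLeftRight ℝ _ (↑hu.unit⁻¹) (↑hu.unit⁻¹))) (Ahat * B + B * Ahat - 1) by simp [ContinuousLinearMap.mulLeftRight_apply, hcoe, mul_assoc]]
    exact h2
  have h4 := h3.const_sub Ahat
  have hfinal : N * (Ahat * B + B * Ahat - 1) * N = Ahat ^ 2 - (Ahat - N) ^ 2 := by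
    have q1 : N * (Ahat * B) * N = N * Ahat := by
      rw [← mul_assoc N Ahat B, mul_assoc (N * Ahat) B N, hBN, mul_one]
    have q2 : N * (B * Ahat) * N = Ahat * N := by
      rw [← mul_assoc N B Ahat, hNB, one_mul]
    have q3 : (Ahat - N) ^ 2 = Ahat * Ahat - Ahat * N - N * Ahat + N * N := by
      rw [pow_two, mul_sub, sub_mul, sub_mul]; abel
    rw [mul_sub, mul_add, mul_one, sub_mul, add_mul, q1, q2, q3, pow_two]
    abel
  rw [riccatiSol_eq]
  rw [neg_neg, hfinal] at h4
  exact h4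

lemma riccati_terminal (T : ℝ) (Ahat C : Matrix (Fin d) (Fin d) ℝ)
    (hA : Ahat.PosDef) (hC : C.PosSemidef) : riccatiSol d T Ahat C T = -C := by
  have hdet : IsUnit (C + Ahat).det :=
    (Matrix.isUnit_iff_isUnit_det _).mp (Matrix.PosDef.posSemidef_add hC hA).isUnit
  have h0 : riccatiSol d T Ahat C T = Ahat - ((C + Ahat)⁻¹)⁻¹ := by
    unfold riccatiSol
    simp [sub_self, exp_zero]
  rw [h0, Matrix.nonsing_inv_nonsing_inv _ hdet]
  abel

/-- `riccatiSol` is the unique solution on `[0,T]` of `a'(t) = Ahat² − a(t)²`, `a(T) = −C`. -/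
theorem riccati_explicit_unique (d : ℕ) (T : ℝ) (hT : 0 ≤ T)
    (Ahat C : Matrix (Fin d) (Fin d) ℝ) (hA : Ahat.PosDef) (hC : C.PosSemidef) :
    ((∀ t ∈ Set.Icc (0 : ℝ) T, ∀ i j : Fin d,
        HasDerivAt (fun s => riccatiSol d T Ahat C s i j)
          ((Ahat ^ 2 - riccatiSol d T Ahat C t ^ 2) i j) t) ∧
      riccatiSol d T Ahat C T = -C) ∧
    ∀ b : ℝ → Matrix (Fin d) (Fin d) ℝ,
      (∀ t ∈ Set.Icc (0 : ℝ) T, ∀ i j : Fin d,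
        HasDerivAt (fun s => b s i j) ((Ahat ^ 2 - b t ^ 2) i j) t) →
      b T = -C →
      ∀ t ∈ Set.Icc (0 : ℝ) T, b t = riccatiSol d T Ahat C t := by
  have hderiv : ∀ t ∈ Set.Icc (0:ℝ) T, HasDerivAt (riccatiSol d T Ahat C)
      (Ahat ^ 2 - riccatiSol d T Ahat C t ^ 2) t :=
    fun t ht => hasDerivAt_riccatiSol T Ahat C hA hC ht.2
  refine ⟨⟨fun t ht i j => hasDerivAt_entrywise.mp (hderiv t ht) i j,
    riccati_terminal T Ahat C hA hC⟩, ?_⟩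
  intro b hb hbT t ht
  have hb' : ∀ u ∈ Set.Icc (0:ℝ) T, HasDerivAt b (Ahat ^ 2 - b u ^ 2) u :=
    fun u hu => hasDerivAt_entrywise.mpr (hb u hu)
  have hbc : ContinuousOn b (Set.Icc 0 T) :=
    fun u hu => ((hb' u hu).continuousAt).continuousWithinAt
  have hac : ContinuousOn (riccatiSol d T Ahat C) (Set.Icc 0 T) :=
    fun u hu => ((hderiv u hu).continuousAt).continuousWithinAt
  obtain ⟨R1, hR1⟩ := (isCompact_Icc (a := (0:ℝ)) (b := T)).exists_bound_of_continuousOn hbc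
  obtain ⟨R2, hR2⟩ := (isCompact_Icc (a := (0:ℝ)) (b := T)).exists_bound_of_continuousOn hac
  set R : ℝ := max (max R1 R2) 0 with hRdef
  have hR0 : (0:ℝ) ≤ R := le_max_right _ _
  set K : NNReal := ⟨2 * R, by positivity⟩ with hKdef
  have hKR : (K : ℝ) = 2 * R := rfl
  have hlip : ∀ s : ℝ, LipschitzOnWith K
      (fun x : Matrix (Fin d) (Fin d) ℝ => Ahat ^ 2 - x ^ 2)
      (Metric.closedBall (0 : Matrix (Fin d) (Fin d) ℝ) R) := by
    intro s
    apply LipschitzOnWith.of_dist_le_mul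
    intro x hx y hy
    rw [Metric.mem_closedBall, dist_zero_right] at hx hy
    rw [dist_eq_norm, dist_eq_norm, hKR]
    have hdiff : Ahat ^ 2 - x ^ 2 - (Ahat ^ 2 - y ^ 2) = y * (y - x) + (y - x) * x := by
      rw [pow_two, pow_two]; noncomm_ring
    rw [hdiff]
    calc ‖y * (y - x) + (y - x) * x‖ ≤ ‖y * (y - x)‖ + ‖(y - x) * x‖ := norm_add_le _ _
      _ ≤ ‖y‖ * ‖y - x‖ + ‖y - x‖ * ‖x‖ :=
          add_le_add (norm_mul_le _ _) (norm_mul_le _ _)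
      _ ≤ R * ‖y - x‖ + ‖y - x‖ * R :=
          add_le_add (mul_le_mul_of_nonneg_right hy (norm_nonneg _))
            (mul_le_mul_of_nonneg_left hx (norm_nonneg _))
      _ = 2 * R * ‖x - y‖ := by rw [norm_sub_rev]; ring
  have hmemb : ∀ u ∈ Set.Icc (0:ℝ) T,
      b u ∈ Metric.closedBall (0 : Matrix (Fin d) (Fin d) ℝ) R := by
    intro u hu
    rw [Metric.mem_closedBall, dist_zero_right]
    exact le_trans (hR1 u hu) (le_trans (le_max_left _ _) (le_max_left _ _))
  have hmema : ∀ u ∈ Set.Icc (0:ℝ) T,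
      riccatiSol d T Ahat C u ∈ Metric.closedBall (0 : Matrix (Fin d) (Fin d) ℝ) R := by
    intro u hu
    rw [Metric.mem_closedBall, dist_zero_right]
    exact le_trans (hR2 u hu) (le_trans (le_max_right _ _) (le_max_left _ _))
  have huniq := ODE_solution_unique_of_mem_Icc_left
    (v := fun _ x => Ahat ^ 2 - x ^ 2)
    (s := fun _ => Metric.closedBall (0 : Matrix (Fin d) (Fin d) ℝ) R)
    (K := K) (f := b) (g := riccatiSol d T Ahat C) (a := 0) (b := T)
    (fun s _ => hlip s)
    hbc
    (fun u hu => (hb' u (Set.Ioc_subset_Icc_self hu)).hasDerivWithinAt)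
    (fun u hu => hmemb u (Set.Ioc_subset_Icc_self hu))
    hac
    (fun u hu => (hderiv u (Set.Ioc_subset_Icc_self hu)).hasDerivWithinAt)
    (fun u hu => hmema u (Set.Ioc_subset_Icc_self hu))
    (by rw [hbT, riccati_terminal T Ahat C hA hC])
  exact huniq ht
end
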